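/- Let O be a discrete valuation ring with maximal ideal 𝔪 and finite residue field. Let Sym_d(O) = {a ∈ Mat_d(O) : a^⊤ = a}. For n ≥ 0, let Sym_d(O)_n denote the image of Sym_d(O) under entrywise reduction Mat_d(O) → Mat_d(O/𝔪^n). Then for every n ≥ 0, ask(Sym_d(O)_n) = ask(Mat_d(O/𝔪^n)); that is, the ask zeta function of the symmetric matrices equals that of the full matrix algebra gl_d(O). -/

import Mathlib

/-- The average size of the kernel of the elements of a set `N` of `m × n` matrices
over a commutative ring `S`, where matrices act on row vectors by right multiplication. -/
noncomputable def ask {S : Type*} [CommRing S] {m n : Type*} [Fintype m]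
    (N : Set (Matrix m n S)) : ℚ :=
  (Nat.card N : ℚ)⁻¹ *
    ∑ᶠ a : N, (Nat.card {x : m → S | Matrix.vecMul x (a : Matrix m n S) = 0} : ℚ)

/-- The image of a set of matrices over `R` under entrywise reduction modulo an ideal `c`. -/
def reduceMod {R : Type*} [CommRing R] {d e : ℕ}
    (N : Set (Matrix (Fin d) (Fin e) R)) (c : Ideal R) :
    Set (Matrix (Fin d) (Fin e) (R ⧸ c)) :=
  (fun A : Matrix (Fin d) (Fin e) R => A.map (Ideal.Quotient.mk c)) '' N

section Generic

variable {S : Type*} [CommRing S] {d : ℕ}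

/-- among finitely many elements of a divisibility-total ring, one divides all others -/
lemma exists_dvd_all (htot : ∀ a b : S, a ∣ b ∨ b ∣ a) (x : Fin d → S) (hd : 0 < d) :
    ∃ k, ∀ i, x k ∣ x i := by
  have : ∀ s : Finset (Fin d), s.Nonempty → ∃ k ∈ s, ∀ i ∈ s, x k ∣ x i := by
    intro s
    induction s using Finset.cons_induction with
    | empty => rintro ⟨i, hi⟩; exact absurd hi (Finset.notMem_empty i)
    | cons a s ha ih =>
      intro _
      rcases s.eq_empty_or_nonempty with rfl | hs
      · exact ⟨a, Finset.mem_cons_self a _, by simp⟩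
      · obtain ⟨k, hk, hkdvd⟩ := ih hs
        rcases htot (x k) (x a) with h | h
        · exact ⟨k, Finset.mem_cons_of_mem hk, fun i hi => by
            rcases Finset.mem_cons.mp hi with rfl | hi
            · exact h
            · exact hkdvd i hi⟩
        · exact ⟨a, Finset.mem_cons_self a _, fun i hi => by
            rcases Finset.mem_cons.mp hi with rfl | hi
            · exact dvd_rfl
            · exact h.trans (hkdvd i hi)⟩
  obtain ⟨k, -, hk⟩ := this Finset.univ ⟨⟨0, hd⟩, Finset.mem_univ _⟩
  exact ⟨k, fun i => hk i (Finset.mem_univ i)⟩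

/-- Key lemma: every vecMul value attained by some matrix is attained by a symmetric one. -/
lemma exists_symm_vecMul (htot : ∀ a b : S, a ∣ b ∨ b ∣ a) (x : Fin d → S)
    (a : Matrix (Fin d) (Fin d) S) :
    ∃ b : Matrix (Fin d) (Fin d) S, b.transpose = b ∧
      Matrix.vecMul x b = Matrix.vecMul x a := by
  rcases Nat.eq_zero_or_pos d with rfl | hd
  · exact ⟨0, by simp [Matrix.transpose_zero], Subsingleton.elim _ _⟩
  obtain ⟨k, hk⟩ := exists_dvd_all htot x hd
  choose c hc using hk
  set s : Fin d → S := fun j => ∑ i, c i * a i j with hs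
  set w : S := ∑ i, c i * s i with hw
  refine ⟨fun i j => (if i = k then s j else 0) + (if j = k then s i else 0)
    - (if i = k then if j = k then w else 0 else 0), ?_, ?_⟩
  · ext i j
    simp only [Matrix.transpose, Matrix.of_apply]
    by_cases hi : i = k <;> by_cases hj : j = k <;> simp [hi, hj]
  · funext j
    have hxc : ∀ i, x i = x k * c i := hc
    have e1 : ∑ i, x i * (if i = k then s j else 0) = x k * s j := by
      simp [mul_ite, Finset.sum_ite_eq']
    have e2 : ∑ i, x i * (if j = k then s i else 0)
        = if j = k then x k * w else 0 := by
      by_cases hj : j = k <;> simp [hj, hw, Finset.mul_sum]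
      · refine Finset.sum_congr rfl fun i _ => ?_
        rw [hxc i]; ring
    have e3 : ∑ i, x i * (if i = k then if j = k then w else 0 else 0)
        = if j = k then x k * w else 0 := by
      by_cases hj : j = k <;> simp [hj, mul_ite, Finset.sum_ite_eq']
    have e4 : ∑ i, x i * a i j = x k * s j := by
      simp only [hs, Finset.mul_sum]
      refine Finset.sum_congr rfl fun i _ => ?_
      rw [hxc i]; ring
    simp only [Matrix.vecMul, dotProduct, mul_add, mul_sub,
      Finset.sum_add_distrib, Finset.sum_sub_distrib, e1, e2, e3, e4]
    ring


variable (S d) in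
/-- Symmetric matrices as a submodule. -/
def symSub [CommRing S] : Submodule S (Matrix (Fin d) (Fin d) S) where
  carrier := {a | a.transpose = a}
  add_mem' := by intro a b ha hb; simp only [Set.mem_setOf_eq] at *
                 rw [Matrix.transpose_add, ha, hb]
  zero_mem' := Matrix.transpose_zero
  smul_mem' := by intro r a ha; simp only [Set.mem_setOf_eq] at *
                  rw [Matrix.transpose_smul, ha]

/-- Right multiplication on row vectors, as a linear map in the matrix. -/
def phiMap (x : Fin d → S) : Matrix (Fin d) (Fin d) S →ₗ[S] (Fin d → S) where
  toFun a := Matrix.vecMul x a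
  map_add' a b := Matrix.vecMul_add a b x
  map_smul' r a := by
    funext j
    simp only [Matrix.vecMul, dotProduct, Matrix.smul_apply, RingHom.id_apply,
      Pi.smul_apply, smul_eq_mul, Finset.mul_sum]
    exact Finset.sum_congr rfl fun i _ => by ring

lemma range_phi_comp_sym (htot : ∀ a b : S, a ∣ b ∨ b ∣ a) (x : Fin d → S) :
    LinearMap.range ((phiMap x).comp (symSub S d).subtype) = LinearMap.range (phiMap x) := by
  refine le_antisymm (LinearMap.range_comp_le_range _ _) ?_
  rintro v ⟨a, rfl⟩
  obtain ⟨b, hb, hvb⟩ := exists_symm_vecMul htot x a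
  exact ⟨⟨b, hb⟩, hvb⟩

lemma card_eq_ker_mul_range {M V : Type*} [AddCommGroup M] [Module S M]
    [AddCommGroup V] [Module S V] (f : M →ₗ[S] V) :
    Nat.card M = Nat.card (LinearMap.ker f) * Nat.card (LinearMap.range f) := by
  rw [Submodule.card_eq_card_quotient_mul_card (LinearMap.ker f)]
  congr 1
  exact Nat.card_congr f.quotKerEquivRange.toEquiv


lemma nat_card_setOf_q {α : Type*} [Fintype α] (P : α → Prop) [DecidablePred P] :
    (Nat.card {z : α | P z} : ℚ) = ∑ z : α, if P z then (1 : ℚ) else 0 := by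
  rw [Nat.card_eq_card_toFinset, Set.toFinset_setOf, Finset.card_filter]
  push_cast
  exact Finset.sum_congr rfl fun z _ => by split <;> simp

lemma ask_eq_sum_fibers [Fintype S] (N : Set (Matrix (Fin d) (Fin d) S)) :
    ask N = (Nat.card N : ℚ)⁻¹ *
      ∑ x : Fin d → S,
        (Nat.card {a : N | Matrix.vecMul x (a : Matrix (Fin d) (Fin d) S) = 0} : ℚ) := by
  classical
  unfold ask
  congr 1
  rw [finsum_eq_sum_of_fintype]
  calc ∑ a : N, (Nat.card {x : Fin d → S | Matrix.vecMul x (a : Matrix (Fin d) (Fin d) S) = 0} : ℚ)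
      = ∑ a : N, ∑ x : Fin d → S,
          if Matrix.vecMul x (a : Matrix (Fin d) (Fin d) S) = 0 then (1 : ℚ) else 0 :=
        Finset.sum_congr rfl fun a _ => nat_card_setOf_q _
    _ = ∑ x : Fin d → S, ∑ a : N,
          if Matrix.vecMul x (a : Matrix (Fin d) (Fin d) S) = 0 then (1 : ℚ) else 0 :=
        Finset.sum_comm
    _ = _ := Finset.sum_congr rfl fun x _ => (nat_card_setOf_q _).symm

lemma ask_sym_eq_ask_univ_generic [Finite S] (htot : ∀ a b : S, a ∣ b ∨ b ∣ a) :
    ask {a : Matrix (Fin d) (Fin d) S | a.transpose = a} =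
      ask (Set.univ : Set (Matrix (Fin d) (Fin d) S)) := by
  cases nonempty_fintype S
  classical
  set N : Set (Matrix (Fin d) (Fin d) S) := {a | a.transpose = a} with hN
  rw [ask_eq_sum_fibers, ask_eq_sum_fibers]
  have hcSym : Nat.card N = Nat.card (symSub S d) :=
    Nat.card_congr ⟨fun a => ⟨a.1, a.2⟩, fun a => ⟨a.1, a.2⟩, fun _ => rfl, fun _ => rfl⟩
  have hcUniv : Nat.card (Set.univ : Set (Matrix (Fin d) (Fin d) S))
      = Nat.card (Matrix (Fin d) (Fin d) S) := Nat.card_congr (Equiv.Set.univ _)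
  have hker1 : ∀ x : Fin d → S,
      Nat.card {a : N | Matrix.vecMul x (a : Matrix (Fin d) (Fin d) S) = 0}
        = Nat.card (LinearMap.ker ((phiMap x).comp (symSub S d).subtype)) :=
    fun x => Nat.card_congr
      ⟨fun p => ⟨⟨p.1.1, p.1.2⟩, p.2⟩, fun q => ⟨⟨q.1.1, q.1.2⟩, q.2⟩,
        fun _ => rfl, fun _ => rfl⟩
  have hker2 : ∀ x : Fin d → S,
      Nat.card {a : (Set.univ : Set (Matrix (Fin d) (Fin d) S)) |
          Matrix.vecMul x (a : Matrix (Fin d) (Fin d) S) = 0}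
        = Nat.card (LinearMap.ker (phiMap x)) :=
    fun x => Nat.card_congr
      ⟨fun p => ⟨p.1.1, p.2⟩, fun q => ⟨⟨q.1, trivial⟩, q.2⟩,
        fun _ => rfl, fun _ => rfl⟩
  rw [Finset.mul_sum, Finset.mul_sum, hcSym, hcUniv]
  refine Finset.sum_congr rfl fun x _ => ?_
  rw [hker1 x, hker2 x]
  -- per-term identity
  have h1 := card_eq_ker_mul_range ((phiMap x).comp (symSub S d).subtype)
  have h2 := card_eq_ker_mul_range (phiMap x)
  rw [range_phi_comp_sym htot x] at h1
  set kS := Nat.card (LinearMap.ker ((phiMap x).comp (symSub S d).subtype))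
  set kM := Nat.card (LinearMap.ker (phiMap x))
  set r := Nat.card (LinearMap.range (phiMap x))
  have hkS : (0:ℚ) < kS := by
    have : Nonempty (LinearMap.ker ((phiMap x).comp (symSub S d).subtype)) := ⟨0⟩
    exact_mod_cast Nat.card_pos
  have hkM : (0:ℚ) < kM := by
    have : Nonempty (LinearMap.ker (phiMap x)) := ⟨0⟩
    exact_mod_cast Nat.card_pos
  have hr : (0:ℚ) < r := by
    have : Nonempty (LinearMap.range (phiMap x)) := ⟨0⟩
    exact_mod_cast Nat.card_pos
  rw [h1, h2]
  push_cast
  field_simp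

end Generic

open IsLocalRing in
private theorem finite_quot_pow {O : Type*} [CommRing O] [IsDomain O] [IsDiscreteValuationRing O]
    [Finite (ResidueField O)] (n : ℕ) : Finite (O ⧸ maximalIdeal O ^ n) := by
  induction n with
  | zero =>
    rw [pow_zero, Ideal.one_eq_top]
    exact Finite.of_subsingleton
  | succ n ih =>
    set I := maximalIdeal O ^ (n+1) with hI
    set J := (maximalIdeal O ^ n).map (Ideal.Quotient.mk I) with hJ
    have hle : I ≤ maximalIdeal O ^ n := Ideal.pow_le_pow_right n.le_succ
    have h1 : Finite ((O ⧸ I) ⧸ J) :=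
      Finite.of_equiv _ (DoubleQuot.quotQuotEquivQuotOfLE hle).toEquiv.symm
    obtain ⟨π, hπ⟩ := IsDiscreteValuationRing.exists_irreducible O
    have hspan : maximalIdeal O = Ideal.span {π} :=
      (IsDiscreteValuationRing.irreducible_iff_uniformizer π).mp hπ
    have hmem : ∀ r : O, π ^ n * r ∈ maximalIdeal O ^ n := fun r => by
      rw [hspan, Ideal.span_singleton_pow]
      exact Ideal.mem_span_singleton.mpr ⟨r, rfl⟩
    have hπmem : π ∈ maximalIdeal O := by
      rw [hspan]; exact Ideal.mem_span_singleton_self π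
    have hsurj : Function.Surjective
        (fun y : ResidueField O => (⟨Ideal.Quotient.mk I (π ^ n *
          Function.surjInv Ideal.Quotient.mk_surjective y),
          Ideal.mem_map_of_mem _ (hmem _)⟩ : J)) := by
      rintro ⟨x, hx⟩
      rw [hJ, Ideal.mem_map_iff_of_surjective _ Ideal.Quotient.mk_surjective] at hx
      obtain ⟨y, hy, rfl⟩ := hx
      rw [hspan, Ideal.span_singleton_pow, Ideal.mem_span_singleton] at hy
      obtain ⟨r, rfl⟩ := hy
      refine ⟨residue O r, ?_⟩
      ext
      have hs : residue O (Function.surjInv (Ideal.Quotient.mk_surjective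
          (I := maximalIdeal O)) (residue O r)) = residue O r :=
        Function.surjInv_eq _ _
      simp only
      replace hs : Function.surjInv Ideal.Quotient.mk_surjective ((residue O) r) - r
          ∈ maximalIdeal O := Ideal.Quotient.eq.mp hs
      rw [Ideal.Quotient.eq]
      have heq : π ^ n * Function.surjInv Ideal.Quotient.mk_surjective ((residue O) r)
          - π ^ n * r = π ^ n * (Function.surjInv Ideal.Quotient.mk_surjective
            ((residue O) r) - r) := by ring
      rw [heq, hI, pow_succ]
      exact Ideal.mul_mem_mul (by simpa using hmem 1) hs
    have h2 : Finite J := Finite.of_surjective _ hsurj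
    have h2' : Finite J.toAddSubgroup := h2
    have h1' : Finite ((O ⧸ I) ⧸ J.toAddSubgroup) := h1
    exact Finite.of_equiv _ (AddSubgroup.addGroupEquivQuotientProdAddSubgroup
      (s := J.toAddSubgroup)).symm

lemma reduceMod_sym {R : Type*} [CommRing R] {d : ℕ} (c : Ideal R) :
    reduceMod {a : Matrix (Fin d) (Fin d) R | a.transpose = a} c =
      {b : Matrix (Fin d) (Fin d) (R ⧸ c) | b.transpose = b} := by
  ext b
  constructor
  · rintro ⟨a, ha, rfl⟩
    simp only [Set.mem_setOf_eq] at ha ⊢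
    rw [← Matrix.transpose_map, ha]
  · intro hb
    simp only [Set.mem_setOf_eq] at hb
    set l : (R ⧸ c) → R := Function.surjInv Ideal.Quotient.mk_surjective with hl
    have hls : ∀ y, Ideal.Quotient.mk c (l y) = y := fun y => Function.surjInv_eq _ _
    refine ⟨fun i j => if i ≤ j then l (b i j) else l (b j i), ?_, ?_⟩
    · show Matrix.transpose _ = _
      ext i j
      simp only [Matrix.transpose, Matrix.of_apply]
      rcases le_total i j with hij | hij
      · rcases eq_or_lt_of_le hij with rfl | hlt
        · simp
        · rw [if_neg (not_le.mpr hlt), if_pos hij]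
      · rcases eq_or_lt_of_le hij with rfl | hlt
        · simp
        · rw [if_pos hij, if_neg (not_le.mpr hlt)]
    · ext i j
      simp only [Matrix.map, Matrix.of_apply]
      split
      · rw [hls]
      · rw [hls]
        exact (congrFun (congrFun hb j) i).symm


open IsLocalRing in
/-- The ask zeta function of the symmetric matrices `Sym_d(O)` coincides with that of
`gl_d(O)`: at every level `n`, `ask(Sym_d(O)_n) = ask(Mat_d(O/𝔪^n))`. -/
theorem ask_sym_eq_ask_gl {O : Type*} [CommRing O] [IsDomain O] [IsDiscreteValuationRing O]
    [Finite (IsLocalRing.ResidueField O)]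
    (d : ℕ) (n : ℕ) :
    ask (reduceMod {a : Matrix (Fin d) (Fin d) O | a.transpose = a}
        (IsLocalRing.maximalIdeal O ^ n)) =
      ask (Set.univ : Set (Matrix (Fin d) (Fin d) (O ⧸ IsLocalRing.maximalIdeal O ^ n))) := by
  have hfin : Finite (O ⧸ IsLocalRing.maximalIdeal O ^ n) := finite_quot_pow n
  have htot : ∀ a b : O ⧸ IsLocalRing.maximalIdeal O ^ n, a ∣ b ∨ b ∣ a := by
    intro a b
    obtain ⟨a', rfl⟩ := Ideal.Quotient.mk_surjective a
    obtain ⟨b', rfl⟩ := Ideal.Quotient.mk_surjective b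
    rcases ValuationRing.dvd_total a' b' with h | h
    · exact Or.inl (map_dvd _ h)
    · exact Or.inr (map_dvd _ h)
  rw [reduceMod_sym]
  exact ask_sym_eq_ask_univ_generic htot
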